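/- Let n be a natural number, let r be a positive real number with r ≠ 1, and let T be a ℂ-linear automorphism of ℂⁿ all of whose eigenvalues λ satisfy |λ| = r. Let S be a set of polynomials in n variables over ℂ and let Z = {x ∈ ℂⁿ : p(x) = 0 for all p ∈ S} be their common zero locus. If T maps Z into Z, then Z is stable under scalar multiplication: for every x ∈ Z and every c ∈ ℂ, the point c·x lies in Z. -/

import Mathlib

open MvPolynomial Module Filter

namespace Statement12Aux

variable {n : ℕ}

/-- Substitution of a linear map into multivariate polynomials: `p ↦ p ∘ A`. -/
noncomputable def subst (A : (Fin n → ℂ) →ₗ[ℂ] (Fin n → ℂ)) :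
    MvPolynomial (Fin n) ℂ →ₐ[ℂ] MvPolynomial (Fin n) ℂ :=
  aeval (fun i => ∑ j, C (A (Pi.single j 1) i) * X j)

lemma eval_subst (A : (Fin n → ℂ) →ₗ[ℂ] (Fin n → ℂ)) (p : MvPolynomial (Fin n) ℂ)
    (x : Fin n → ℂ) : eval x (subst A p) = eval (A x) p := by
  rw [subst, aeval_def, eval_eval₂]
  have h1 : ∀ i : Fin n, eval x (∑ j, C (A (Pi.single j 1) i) * X j) = A x i := by
    intro i
    rw [LinearMap.pi_apply_eq_sum_univ A x]
    simp only [map_sum, eval_mul, eval_C, eval_X, Finset.sum_apply, Pi.smul_apply, smul_eq_mul]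
    refine Finset.sum_congr rfl fun j _ => ?_
    rw [mul_comm]
    have : (Pi.single j 1 : Fin n → ℂ) = fun k => if j = k then 1 else 0 := by
      funext k; simp [Pi.single_apply, eq_comm]
    rw [this]
  have h2 : (eval x).comp ((algebraMap ℂ (MvPolynomial (Fin n) ℂ))) = RingHom.id ℂ := by
    ext c; simp [algebraMap_eq]
  rw [h2]
  simp only [h1]
  rw [eval₂_id]

lemma subst_mem (A : (Fin n → ℂ) →ₗ[ℂ] (Fin n → ℂ)) {d : ℕ} {q : MvPolynomial (Fin n) ℂ}
    (hq : q ∈ homogeneousSubmodule (Fin n) ℂ d) :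
    subst A q ∈ homogeneousSubmodule (Fin n) ℂ d := by
  rw [mem_homogeneousSubmodule] at hq ⊢
  have := hq.aeval (fun i => ∑ j, C (A (Pi.single j 1) i) * X j)
    (fun i => IsHomogeneous.sum _ _ _ (fun j _ => isHomogeneous_C_mul_X _ _))
  simpa [subst] using this

lemma degree_univ_sum (m : Fin n →₀ ℕ) : ∑ i, m i = m.degree := by
  rw [Finsupp.degree]
  exact (Finset.sum_subset (Finset.subset_univ _)
    (by simp +contextual [Finsupp.notMem_support_iff])).symm

lemma homog_deg {d : ℕ} {h : MvPolynomial (Fin n) ℂ} (hh : h.IsHomogeneous d)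
    {m : Fin n →₀ ℕ} (hm : m ∈ h.support) : ∑ i, m i = d := by
  rw [degree_univ_sum, Finsupp.degree_eq_weight_one]
  exact hh (mem_support_iff.mp hm)

lemma eval_smul_homog {d : ℕ} {h : MvPolynomial (Fin n) ℂ} (hh : h.IsHomogeneous d)
    (c : ℂ) (x : Fin n → ℂ) : eval (c • x) h = c ^ d * eval x h := by
  rw [eval_eq', eval_eq', Finset.mul_sum]
  refine Finset.sum_congr rfl fun m hm => ?_
  have : ∏ i, (c • x) i ^ m i = c ^ d * ∏ i, x i ^ m i := by
    simp only [Pi.smul_apply, smul_eq_mul, mul_pow]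
    rw [Finset.prod_mul_distrib, Finset.prod_pow_eq_pow_sum, homog_deg hh hm]
  rw [this]; ring

lemma exists_bound {d : ℕ} {h : MvPolynomial (Fin n) ℂ} (hh : h.IsHomogeneous d) :
    ∃ C : ℝ, 0 ≤ C ∧ ∀ z : Fin n → ℂ, ‖eval z h‖ ≤ C * ‖z‖ ^ d := by
  refine ⟨∑ m ∈ h.support, ‖coeff m h‖,
    Finset.sum_nonneg fun _ _ => norm_nonneg _, fun z => ?_⟩
  rw [eval_eq']
  refine (norm_sum_le _ _).trans ?_
  rw [Finset.sum_mul]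
  refine Finset.sum_le_sum fun m hm => ?_
  rw [norm_mul]
  refine mul_le_mul_of_nonneg_left ?_ (norm_nonneg _)
  rw [norm_prod]
  calc ∏ i, ‖z i ^ m i‖ ≤ ∏ i, ‖z‖ ^ m i := by
        refine Finset.prod_le_prod (fun _ _ => norm_nonneg _) fun i _ => ?_
        rw [norm_pow]
        exact pow_le_pow_left₀ (norm_nonneg _)
          (norm_le_pi_norm z i) _
    _ = ‖z‖ ^ d := by rw [Finset.prod_pow_eq_pow_sum, homog_deg hh hm]

lemma growth (A : (Fin n → ℂ) →L[ℂ] (Fin n → ℂ)) (ρ s : ℝ) (hρ : 0 ≤ ρ) (hs : ρ < s)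
    (hspec : ∀ μ ∈ spectrum ℂ A, ‖μ‖ ≤ ρ) :
    ∃ C : ℝ, 0 < C ∧ ∀ k : ℕ, ‖A ^ k‖ ≤ C * s ^ k := by
  have hs0 : 0 < s := lt_of_le_of_lt hρ hs
  have hrad : spectralRadius ℂ A ≤ ENNReal.ofReal ρ := by
    rw [spectralRadius]
    refine iSup₂_le fun μ hμ => ?_
    have h1 : ‖μ‖ ≤ ρ := hspec μ hμ
    rw [← ENNReal.ofReal_coe_nnreal, coe_nnnorm]
    exact ENNReal.ofReal_le_ofReal h1
  have htend := spectrum.pow_nnnorm_pow_one_div_tendsto_nhds_spectralRadius A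
  have hev : ∀ᶠ k : ℕ in atTop, ((‖A ^ k‖₊ : ENNReal) ^ (1 / (k : ℝ))) < ENNReal.ofReal s := by
    apply htend.eventually_lt_const
    exact lt_of_le_of_lt hrad (ENNReal.ofReal_lt_ofReal_iff hs0 |>.mpr hs)
  obtain ⟨K, hK⟩ := hev.exists_forall_of_atTop
  have key : ∀ k : ℕ, k ≠ 0 → k ≥ K → ‖A ^ k‖ ≤ s ^ k := by
    intro k hk0 hkK
    have h1 := (hK k hkK).le
    have h2 : ((‖A ^ k‖₊ : ENNReal) ^ (1 / (k : ℝ))) ^ (k : ℝ) ≤ (ENNReal.ofReal s) ^ (k : ℝ) :=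
      ENNReal.rpow_le_rpow h1 (Nat.cast_nonneg k)
    rw [← ENNReal.rpow_mul, one_div, inv_mul_cancel₀ (by exact_mod_cast hk0), ENNReal.rpow_one,
      ← ENNReal.ofReal_coe_nnreal, coe_nnnorm, ENNReal.ofReal_rpow_of_nonneg hs0.le (Nat.cast_nonneg k)] at h2
    have h3 := (ENNReal.ofReal_le_ofReal_iff (by positivity)).mp h2
    rwa [Real.rpow_natCast] at h3
  set C : ℝ := 1 + ∑ j ∈ Finset.range (K + 1), ‖A ^ j‖ / s ^ j with hC
  have hCpos : 0 < C := by
    have : (0:ℝ) ≤ ∑ j ∈ Finset.range (K + 1), ‖A ^ j‖ / s ^ j :=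
      Finset.sum_nonneg fun j _ => div_nonneg (norm_nonneg _) (by positivity)
    rw [hC]; linarith
  refine ⟨C, hCpos, fun k => ?_⟩
  rcases le_or_gt k K with hk | hk
  · have h1 : ‖A ^ k‖ / s ^ k ≤ C - 1 := by
      rw [hC, add_sub_cancel_left]
      exact Finset.single_le_sum (f := fun j => ‖A ^ j‖ / s ^ j)
        (fun j _ => div_nonneg (norm_nonneg _) (by positivity))
        (Finset.mem_range.mpr (Nat.lt_succ_of_le hk))
    have h2 : ‖A ^ k‖ ≤ (C - 1) * s ^ k := by
      rw [← div_le_iff₀ (by positivity)]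
      exact h1
    nlinarith [pow_pos hs0 k, norm_nonneg (A ^ k)]
  · have hkey := key k (by omega) hk.le
    have h1 : (1:ℝ) ≤ C := by
      have : (0:ℝ) ≤ ∑ j ∈ Finset.range (K + 1), ‖A ^ j‖ / s ^ j :=
        Finset.sum_nonneg fun j _ => div_nonneg (norm_nonneg _) (by positivity)
      rw [hC]; linarith
    calc ‖A ^ k‖ ≤ s ^ k := hkey
      _ ≤ C * s ^ k := le_mul_of_one_le_left (by positivity) h1

lemma spec_eigen (U : (Fin n → ℂ) ≃ₗ[ℂ] (Fin n → ℂ)) (μ : ℂ)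
    (hμ : μ ∈ spectrum ℂ (LinearMap.toContinuousLinearMap U.toLinearMap)) :
    Module.End.HasEigenvalue U.toLinearMap μ := by
  rw [spectrum.mem_iff] at hμ
  rw [Module.End.hasEigenvalue_iff]
  intro hcon
  apply hμ
  rw [ContinuousLinearMap.isUnit_iff_bijective]
  have hker : Function.Injective (μ • (1 : Module.End ℂ (Fin n → ℂ)) - U.toLinearMap) := by
    rw [← LinearMap.ker_eq_bot, LinearMap.ker_eq_bot']
    intro v hv
    by_contra hv0
    have hv' : U.toLinearMap v = μ • v := by
      have := sub_eq_zero.mp ((by simpa using hv : μ • v - U.toLinearMap v = 0))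
      exact this.symm
    have : v ∈ Module.End.eigenspace U.toLinearMap μ := Module.End.mem_eigenspace_iff.mpr hv'
    rw [hcon] at this
    exact hv0 (Submodule.mem_bot _ |>.mp this)
  have hbij : Function.Bijective (μ • (1 : Module.End ℂ (Fin n → ℂ)) - U.toLinearMap) :=
    ⟨hker, (LinearMap.injective_iff_surjective).mp hker⟩
  have heq : ⇑((algebraMap ℂ ((Fin n → ℂ) →L[ℂ] Fin n → ℂ)) μ
        - LinearMap.toContinuousLinearMap U.toLinearMap)
      = ⇑(μ • (1 : Module.End ℂ (Fin n → ℂ)) - U.toLinearMap) := by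
    funext v
    simp [Algebra.algebraMap_eq_smul_one]
  rw [heq]
  exact hbij

lemma absle (U : (Fin n → ℂ) ≃ₗ[ℂ] (Fin n → ℂ)) (r' : ℝ) (hr' : 0 < r')
    (hU : ∀ μ : ℂ, Module.End.HasEigenvalue U.toLinearMap μ → ‖μ‖ ≤ r')
    {d : ℕ} {h : MvPolynomial (Fin n) ℂ} (hh : h.IsHomogeneous d) (hne : h ≠ 0)
    {μ : ℂ} (hμ : ∀ y, eval (U y) h = μ * eval y h) :
    ‖μ‖ ≤ r' ^ d := by
  have hy0 : ∃ y0, eval y0 h ≠ 0 := by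
    by_contra hall
    push_neg at hall
    exact hne (MvPolynomial.funext fun y => by simp [hall y])
  obtain ⟨y0, hy0⟩ := hy0
  rcases Nat.eq_zero_or_pos d with rfl | hd
  · have hconst : ∀ y, eval y h = eval (0 : Fin n → ℂ) h := by
      intro y
      have := eval_smul_homog hh 0 y
      simpa using this.symm
    have ha : eval (0 : Fin n → ℂ) h ≠ 0 := by rw [← hconst y0]; exact hy0
    have : eval (0 : Fin n → ℂ) h = μ * eval (0 : Fin n → ℂ) h := by
      have := hμ y0; rwa [hconst (U y0), hconst y0] at this
    have hμ1 : μ = 1 := by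
      have h' : (μ - 1) * eval (0 : Fin n → ℂ) h = 0 := by linear_combination -this
      rcases mul_eq_zero.mp h' with h1 | h2
      · have := sub_eq_zero.mp h1; exact this
      · exact absurd h2 ha
    simp [hμ1]
  · by_contra hcon
    push_neg at hcon
    obtain ⟨s, hs1, hs2⟩ : ∃ s, r' < s ∧ s ^ d < ‖μ‖ := by
      have hcont : ContinuousAt (fun u : ℝ => u ^ d) r' := (continuous_pow d).continuousAt
      have hev : ∀ᶠ u in nhds r', (fun u : ℝ => u ^ d) u < ‖μ‖ :=
        hcont.eventually_lt_const hcon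
      have hev2 : ∀ᶠ u in nhdsWithin r' (Set.Ioi r'), u ^ d < ‖μ‖ :=
        nhdsWithin_le_nhds hev
      obtain ⟨s, hs2, hs1⟩ := (hev2.and self_mem_nhdsWithin).exists
      exact ⟨s, hs1, hs2⟩
    obtain ⟨C, hC0, hCb⟩ := exists_bound hh
    set A := LinearMap.toContinuousLinearMap U.toLinearMap with hA
    have hspec : ∀ ν ∈ spectrum ℂ A, ‖ν‖ ≤ r' := fun ν hν => hU ν (spec_eigen U ν hν)
    obtain ⟨D, hD0, hDb⟩ := growth A r' s hr'.le hs1 hspec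
    have hAapp : ∀ z, A z = U z := fun z => rfl
    have hiter : ∀ k : ℕ, eval ((A ^ k) y0) h = μ ^ k * eval y0 h := by
      intro k
      induction k with
      | zero => simp
      | succ k ih =>
        rw [pow_succ', ContinuousLinearMap.mul_apply, hAapp, hμ, ih]
        ring
    have hkey : ∀ k : ℕ, ‖μ‖ ^ k * ‖eval y0 h‖ ≤
        (C * D ^ d * ‖y0‖ ^ d) * (s ^ d) ^ k := by
      intro k
      have h1 : ‖eval ((A ^ k) y0) h‖ ≤ C * ‖(A ^ k) y0‖ ^ d := hCb _
      rw [hiter k, norm_mul, norm_pow] at h1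
      have h2 : ‖(A ^ k) y0‖ ≤ D * s ^ k * ‖y0‖ := by
        calc ‖(A ^ k) y0‖ ≤ ‖A ^ k‖ * ‖y0‖ := (A ^ k).le_opNorm y0
          _ ≤ D * s ^ k * ‖y0‖ := mul_le_mul_of_nonneg_right (hDb k) (norm_nonneg _)
      have hs0 : (0:ℝ) < s := lt_trans hr' hs1
      have h3 : ‖(A ^ k) y0‖ ^ d ≤ (D * s ^ k * ‖y0‖) ^ d :=
        pow_le_pow_left₀ (norm_nonneg _) h2 d
      calc ‖μ‖ ^ k * ‖eval y0 h‖ ≤ C * ‖(A ^ k) y0‖ ^ d := h1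
        _ ≤ C * (D * s ^ k * ‖y0‖) ^ d := mul_le_mul_of_nonneg_left h3 hC0
        _ = (C * D ^ d * ‖y0‖ ^ d) * (s ^ d) ^ k := by ring
    have hs0 : (0:ℝ) < s := lt_trans hr' hs1
    have hsd : (0:ℝ) < s ^ d := by positivity
    have hq : 1 < ‖μ‖ / s ^ d := (one_lt_div hsd).mpr hs2
    have habs0 : 0 < ‖eval y0 h‖ := norm_pos_iff.mpr hy0
    obtain ⟨k, hk⟩ := pow_unbounded_of_one_lt
      ((C * D ^ d * ‖y0‖ ^ d) / ‖eval y0 h‖) hq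
    rw [div_pow, div_lt_div_iff₀ habs0 (by positivity)] at hk
    linarith [hkey k]

lemma abs_eigen (T : (Fin n → ℂ) ≃ₗ[ℂ] (Fin n → ℂ)) (r : ℝ) (hr0 : 0 < r)
    (hT : ∀ μ : ℂ, Module.End.HasEigenvalue T.toLinearMap μ → ‖μ‖ = r)
    {d : ℕ} {h : MvPolynomial (Fin n) ℂ} (hh : h.IsHomogeneous d) (hne : h ≠ 0)
    {μ : ℂ} (hμ : ∀ y, eval (T y) h = μ * eval y h) :
    ‖μ‖ = r ^ d := by
  have hupper : ‖μ‖ ≤ r ^ d :=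
    absle T r hr0 (fun ν hν => (hT ν hν).le) hh hne hμ
  have hμ0 : μ ≠ 0 := by
    rintro rfl
    apply hne
    apply MvPolynomial.funext
    intro z
    have := hμ (T.symm z)
    rw [LinearEquiv.apply_symm_apply] at this
    simpa using this
  have hμ' : ∀ z, eval (T.symm z) h = μ⁻¹ * eval z h := by
    intro z
    have := hμ (T.symm z)
    rw [LinearEquiv.apply_symm_apply] at this
    rw [this]
    field_simp
  have hT' : ∀ ν : ℂ, Module.End.HasEigenvalue T.symm.toLinearMap ν → ‖ν‖ ≤ r⁻¹ := by
    intro ν hν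
    obtain ⟨v, hv⟩ := hν.exists_hasEigenvector
    have hv1 : T.symm v = ν • v := Module.End.mem_eigenspace_iff.mp hv.1
    have hvne := hv.2
    have hv2 : v = ν • T v := by
      have h4 := congrArg T hv1
      rw [LinearEquiv.apply_symm_apply, map_smul] at h4
      exact h4
    have hν0 : ν ≠ 0 := by
      rintro rfl
      rw [zero_smul] at hv2
      exact hvne hv2
    have hv3 : T.toLinearMap v = ν⁻¹ • v := by
      have h5 : ν⁻¹ • v = ν⁻¹ • (ν • T v) := by rw [← hv2]
      rw [smul_smul, inv_mul_cancel₀ hν0, one_smul] at h5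
      exact h5.symm
    have heig : Module.End.HasEigenvalue T.toLinearMap ν⁻¹ :=
      Module.End.hasEigenvalue_of_hasEigenvector ⟨Module.End.mem_eigenspace_iff.mpr hv3, hvne⟩
    have := hT ν⁻¹ heig
    rw [norm_inv] at this
    rw [← this, inv_inv]
  have hlower : ‖μ⁻¹‖ ≤ r⁻¹ ^ d :=
    absle T.symm r⁻¹ (inv_pos.mpr hr0) hT' hh hne hμ'
  rw [norm_inv, inv_pow] at hlower
  have habsμ : 0 < ‖μ‖ := norm_pos_iff.mpr hμ0
  have : r ^ d ≤ ‖μ‖ := by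
    rwa [inv_le_inv₀ habsμ (by positivity)] at hlower
  exact le_antisymm hupper this

lemma aeval_comm {M : Type*} [AddCommGroup M] [Module ℂ M] (f : Module.End ℂ M)
    (p : Submodule ℂ M) (hf : ∀ v ∈ p, f v ∈ p) (u : Polynomial ℂ) (q : p) :
    Polynomial.aeval f u (q : M) = ((Polynomial.aeval (f.restrict hf) u) q : M) := by
  induction u using Polynomial.induction_on' with
  | add a b ha hb => simp only [map_add, LinearMap.add_apply, ha, hb, Submodule.coe_add]
  | monomial k a =>
    rw [Polynomial.aeval_monomial, Polynomial.aeval_monomial]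
    simp only [Module.End.mul_apply, Module.algebraMap_end_apply]
    rw [Module.End.pow_restrict]
    simp only [LinearMap.restrict_apply, SetLike.mk_smul_mk]

lemma finH (d : ℕ) : FiniteDimensional ℂ (homogeneousSubmodule (Fin n) ℂ d) :=
  Submodule.finiteDimensional_of_le (S₂ := restrictTotalDegree (Fin n) ℂ d)
    (fun _ hq => (mem_restrictTotalDegree _ _ _).mpr
      ((mem_homogeneousSubmodule _ _).mp hq).totalDegree_le)

lemma pow_inj {r : ℝ} (hr0 : 0 < r) (hr1 : r ≠ 1) {d e : ℕ} (h : r ^ d = r ^ e) : d = e := by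
  rcases lt_trichotomy r 1 with hlt | heq | hgt
  · exact (pow_right_strictAnti₀ hr0 hlt).injective h
  · exact absurd heq hr1
  · exact (pow_right_strictMono₀ hgt).injective h

end Statement12Aux

open Statement12Aux

/-- A closed algebraic subset of `ℂⁿ` stable under a linear automorphism all of whose
eigenvalues have the same absolute value `r ≠ 1` is a cone. -/
theorem statement12 (n : ℕ) (r : ℝ) (hr0 : 0 < r) (hr1 : r ≠ 1)
    (T : (Fin n → ℂ) ≃ₗ[ℂ] (Fin n → ℂ))
    (hT : ∀ μ : ℂ, Module.End.HasEigenvalue T.toLinearMap μ → ‖μ‖ = r)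
    (S : Set (MvPolynomial (Fin n) ℂ))
    (hZ : ∀ x : Fin n → ℂ, (∀ p ∈ S, MvPolynomial.eval x p = 0) →
      ∀ p ∈ S, MvPolynomial.eval (T x) p = 0) :
    ∀ x : Fin n → ℂ, (∀ p ∈ S, MvPolynomial.eval x p = 0) →
      ∀ c : ℂ, ∀ p ∈ S, MvPolynomial.eval (c • x) p = 0 := by
  classical
  intro x hx c p hpS
  set A : Module.End ℂ (Fin n → ℂ) := T.toLinearMap with hA
  set Φ : Module.End ℂ (MvPolynomial (Fin n) ℂ) := (subst A).toLinearMap with hΦ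
  -- orbit of x stays in the zero locus
  have hxk : ∀ k : ℕ, ∀ q ∈ S, eval ((A ^ k) x) q = 0 := by
    intro k
    induction k with
    | zero => simpa using hx
    | succ k ih =>
      intro q hq
      have := hZ ((A ^ k) x) ih q hq
      rw [pow_succ', Module.End.mul_apply]
      exact this
  -- evaluation of iterates
  have hpow : ∀ (k : ℕ) (q : MvPolynomial (Fin n) ℂ), eval x ((Φ ^ k) q) = eval ((A ^ k) x) q := by
    intro k
    induction k with
    | zero => simp
    | succ k ih =>
      intro q
      rw [pow_succ, Module.End.mul_apply, pow_succ', Module.End.mul_apply, ih,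
        hΦ, AlgHom.toLinearMap_apply, eval_subst]
  -- polynomial combinations of iterates vanish at x
  have hvan : ∀ u : Polynomial ℂ, eval x ((Polynomial.aeval Φ u) p) = 0 := by
    intro u
    rw [Polynomial.aeval_eq_sum_range]
    simp only [LinearMap.coe_sum, Finset.sum_apply, LinearMap.smul_apply, map_sum, smul_eval]
    refine Finset.sum_eq_zero fun i _ => ?_
    rw [hpow i p, hxk i p hpS, mul_zero]
  -- the homogeneous pieces
  have hres : ∀ d : ℕ, ∀ q ∈ homogeneousSubmodule (Fin n) ℂ d,
      Φ q ∈ homogeneousSubmodule (Fin n) ℂ d := fun d q hq => subst_mem A hq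
  let Φr : ∀ d : ℕ, Module.End ℂ (homogeneousSubmodule (Fin n) ℂ d) :=
    fun d => Φ.restrict (hres d)
  let χ : ℕ → Polynomial ℂ := fun d => minpoly ℂ (Φr d)
  -- the minimal polynomial kills the corresponding homogeneous piece
  have hkill : ∀ d : ℕ, ∀ q ∈ homogeneousSubmodule (Fin n) ℂ d,
      (Polynomial.aeval Φ (χ d)) q = 0 := by
    intro d q hq
    have h1 := aeval_comm Φ _ (hres d) (χ d) ⟨q, hq⟩
    have h2 : Polynomial.aeval (Φr d) (χ d) = 0 := minpoly.aeval ℂ (Φr d)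
    rw [h1]
    show ((Polynomial.aeval (Φr d) (χ d)) ⟨q, hq⟩ : MvPolynomial (Fin n) ℂ) = 0
    rw [h2]
    rfl
  -- roots of the minimal polynomials
  have hroot : ∀ d : ℕ, ∀ μ : ℂ, (χ d).IsRoot μ → ‖μ‖ = r ^ d := by
    intro d μ hμroot
    haveI := finH (n := n) d
    have heig : Module.End.HasEigenvalue (Φr d) μ :=
      Module.End.hasEigenvalue_iff_isRoot.mpr hμroot
    obtain ⟨q, hq⟩ := heig.exists_hasEigenvector
    have hq1 : Φr d q = μ • q := Module.End.mem_eigenspace_iff.mp hq.1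
    have hq2 : Φ (q : MvPolynomial (Fin n) ℂ) = μ • (q : MvPolynomial (Fin n) ℂ) := by
      have := congrArg (Subtype.val) hq1
      rwa [LinearMap.restrict_apply] at this
    have hhom : (q : MvPolynomial (Fin n) ℂ).IsHomogeneous d :=
      (mem_homogeneousSubmodule _ _).mp q.2
    have hqne : (q : MvPolynomial (Fin n) ℂ) ≠ 0 := by
      intro h0
      exact hq.2 (Subtype.ext h0)
    refine abs_eigen T r hr0 hT hhom hqne (fun y => ?_)
    have h3 : eval y (Φ (q : MvPolynomial (Fin n) ℂ)) = eval (T y) (q : MvPolynomial (Fin n) ℂ) := by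
      rw [hΦ, AlgHom.toLinearMap_apply, eval_subst]
      rfl
    rw [← h3, hq2, smul_eval]
  -- pairwise coprimality
  have hcop : ∀ d e : ℕ, d ≠ e → IsCoprime (χ d) (χ e) := by
    intro d e hde
    rw [Polynomial.isCoprime_iff_aeval_ne_zero_of_isAlgClosed (k := ℂ) ℂ (χ d) (χ e)]
    intro a
    by_contra hcon
    push_neg at hcon
    obtain ⟨h1, h2⟩ := hcon
    have hr1' : (χ d).IsRoot a := by simpa [Polynomial.IsRoot, Polynomial.aeval_def] using h1
    have hr2' : (χ e).IsRoot a := by simpa [Polynomial.IsRoot, Polynomial.aeval_def] using h2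
    exact hde (pow_inj hr0 hr1 ((hroot d a hr1').symm.trans (hroot e a hr2')))
  -- Bezout identity
  set N := p.totalDegree with hN
  set t : Finset ℕ := Finset.range (N + 1) with ht
  have htne : t.Nonempty := ⟨0, by simp [ht]⟩
  obtain ⟨b, hb⟩ := (exists_sum_eq_one_iff_pairwise_coprime (s := χ) htne).mpr
    (fun i j hij => hcop i j (fun h => hij (Subtype.ext h)))
  -- each homogeneous component of p vanishes at x
  have hcomp : ∀ d ∈ t, eval x (homogeneousComponent d p) = 0 := by
    intro d hd
    -- the Bezout projector
    set G : Polynomial ℂ := ∏ j ∈ t \ {d}, χ j with hG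
    have hdvd : ∀ e ∈ t, e ≠ d → χ e ∣ b d * G := by
      intro e he hed
      exact Dvd.dvd.mul_left (Finset.dvd_prod_of_mem χ (Finset.mem_sdiff.mpr ⟨he, by simpa using hed⟩)) (b d)
    -- applying the projector to a homogeneous piece of degree e ≠ d gives 0
    have hzero : ∀ e ∈ t, e ≠ d →
        (Polynomial.aeval Φ (b d * G)) (homogeneousComponent e p) = 0 := by
      intro e he hed
      obtain ⟨w, hw⟩ := hdvd e he hed
      rw [hw, mul_comm, map_mul, Module.End.mul_apply,
        hkill e _ (homogeneousComponent_mem e p), map_zero]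
    -- applying the projector to the degree-d piece gives it back
    have hid : (Polynomial.aeval Φ (b d * G)) (homogeneousComponent d p)
        = homogeneousComponent d p := by
      have h1 : (Polynomial.aeval Φ (1 : Polynomial ℂ)) (homogeneousComponent d p)
          = homogeneousComponent d p := by simp
      rw [← hb] at h1
      rw [map_sum] at h1
      rw [LinearMap.coe_sum, Finset.sum_apply] at h1
      rw [Finset.sum_eq_single d] at h1
      · exact h1
      · intro e he hed
        obtain ⟨w, hw⟩ : χ d ∣ b e * ∏ j ∈ t \ {e}, χ j :=
          Dvd.dvd.mul_left (Finset.dvd_prod_of_mem χ (Finset.mem_sdiff.mpr ⟨hd, by simpa using Ne.symm hed⟩)) (b e)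
        rw [hw, mul_comm, map_mul, Module.End.mul_apply,
          hkill d _ (homogeneousComponent_mem d p), map_zero]
      · intro hdd
        exact absurd hd hdd
    -- the projector sends p to its degree-d component
    have hproj : (Polynomial.aeval Φ (b d * G)) p = homogeneousComponent d p := by
      conv_lhs => rw [← sum_homogeneousComponent p]
      rw [map_sum, ← hN, ← ht]
      rw [Finset.sum_eq_single d]
      · exact hid
      · intro e he hed
        exact hzero e he hed
      · intro hdd
        exact absurd hd hdd
    rw [← hproj]
    exact hvan _
  -- conclude
  have hsplit : eval (c • x) p = ∑ d ∈ t, eval (c • x) (homogeneousComponent d p) := by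
    conv_lhs => rw [← sum_homogeneousComponent p]
    rw [map_sum, ← hN, ← ht]
  rw [hsplit]
  refine Finset.sum_eq_zero fun d hd => ?_
  rw [eval_smul_homog (homogeneousComponent_isHomogeneous d p) c x, hcomp d hd, mul_zero]
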